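/- Let c : ℝ → ℝ be the function c(x) = exp(-1/x²)·sin²(1/x) for x ≠ 0, c(0) = 0. Then c has infinitely many local maxima accumulating at 0; more precisely, there exists a sequence xₙ → 0 of distinct points with xₙ ≠ 0 at which c attains a local maximum with c(xₙ) > 0. -/

import Mathlib

open Filter Real

lemma stmt_6_key (c : ℝ → ℝ)
    (hc : ∀ x : ℝ, x ≠ 0 → c x = Real.exp (-1 / x^2) * (Real.sin (1 / x))^2) (n : ℕ) :
    ∃ x ∈ Set.Ioo (1 / (π * (n + 2))) (1 / (π * (n + 1))),
      IsLocalMax c x ∧ 0 < c x := by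
  have hπ := Real.pi_pos
  set a : ℝ := 1 / (π * (n + 2)) with ha_def
  set b : ℝ := 1 / (π * (n + 1)) with hb_def
  have hd2 : (0:ℝ) < π * (n + 2) := by positivity
  have hd1 : (0:ℝ) < π * (n + 1) := by positivity
  have ha : 0 < a := by positivity
  have hab : a < b := by
    apply one_div_lt_one_div_of_lt hd1
    have : (n:ℝ) + 1 < (n:ℝ) + 2 := by linarith
    nlinarith
  -- continuity of c on Icc a b
  have hcont : ContinuousOn c (Set.Icc a b) := by
    have hg : ContinuousOn (fun x : ℝ => Real.exp (-1 / x^2) * (Real.sin (1 / x))^2)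
        (Set.Icc a b) := by
      apply continuousOn_of_forall_continuousAt
      intro x hx
      have hx0 : x ≠ 0 := by
        have := hx.1; intro h; rw [h] at this; linarith
      have hx2 : x ^ 2 ≠ 0 := pow_ne_zero _ hx0
      fun_prop (disch := assumption)
    exact hg.congr (fun x hx => by
      have hx0 : x ≠ 0 := by
        have := hx.1; intro h; rw [h] at this; linarith
      exact hc x hx0)
  obtain ⟨x, hx, hmax⟩ := isCompact_Icc.exists_isMaxOn
    (Set.nonempty_Icc.2 hab.le) hcont
  -- test point
  set t : ℝ := 1 / (π / 2 + π * (n + 1)) with ht_def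
  have hdt : (0:ℝ) < π / 2 + π * (n + 1) := by positivity
  have ht0 : t ≠ 0 := by positivity
  have htmem : t ∈ Set.Icc a b := by
    constructor
    · exact one_div_le_one_div_of_le hdt (by push_cast; nlinarith)
    · apply one_div_le_one_div_of_le hd1
      nlinarith
  have hct : 0 < c t := by
    rw [hc t ht0]
    have hsin : Real.sin (1 / t) ^ 2 = 1 := by
      rw [ht_def, one_div_one_div]
      have harg : π / 2 + π * (↑n + 1) = π / 2 + (↑(n+1) : ℝ) * π := by push_cast; ring
      rw [harg, Real.sin_add_nat_mul_pi, Real.sin_pi_div_two, mul_one, ← pow_mul,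
        mul_comm, pow_mul]
      norm_num
    rw [hsin, mul_one]
    exact Real.exp_pos _
  have hcx : 0 < c x := lt_of_lt_of_le hct (hmax htmem)
  -- endpoints have c = 0
  have hca : c a = 0 := by
    rw [hc a ha.ne']
    have : Real.sin (1 / a) = 0 := by
      rw [ha_def, one_div_one_div]
      have := Real.sin_nat_mul_pi (n + 2)
      push_cast at this ⊢
      rw [mul_comm]; exact this
    rw [this]; ring
  have hcb : c b = 0 := by
    rw [hc b (by positivity)]
    have : Real.sin (1 / b) = 0 := by
      rw [hb_def, one_div_one_div]
      have := Real.sin_nat_mul_pi (n + 1)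
      push_cast at this ⊢
      rw [mul_comm]; exact this
    rw [this]; ring
  have hxa : x ≠ a := fun h => by rw [h, hca] at hcx; exact lt_irrefl 0 hcx
  have hxb : x ≠ b := fun h => by rw [h, hcb] at hcx; exact lt_irrefl 0 hcx
  have hxI : x ∈ Set.Ioo a b :=
    ⟨hx.1.lt_of_ne (Ne.symm hxa), hx.2.lt_of_ne hxb⟩
  exact ⟨x, hxI, hmax.isLocalMax (Icc_mem_nhds hxI.1 hxI.2), hcx⟩

theorem stmt_6 (c : ℝ → ℝ)
    (hc0 : c 0 = 0)
    (hc : ∀ x : ℝ, x ≠ 0 → c x = Real.exp (-1 / x^2) * (Real.sin (1 / x))^2) :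
    ∃ x : ℕ → ℝ, Tendsto x atTop (nhds 0) ∧ Function.Injective x ∧
      ∀ n : ℕ, x n ≠ 0 ∧ IsLocalMax c (x n) ∧ 0 < c (x n) := by
  have hπ := Real.pi_pos
  choose x hxmem hxmax hxpos using stmt_6_key c hc
  have hxlb : ∀ n, 1 / (π * (n + 2)) < x n := fun n => (hxmem n).1
  have hxub : ∀ n, x n < 1 / (π * (n + 1)) := fun n => (hxmem n).2
  have hx0 : ∀ n, 0 < x n := fun n => lt_trans (by positivity) (hxlb n)
  refine ⟨x, ?_, ?_, fun n => ⟨(hx0 n).ne', hxmax n, hxpos n⟩⟩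
  · apply tendsto_of_tendsto_of_tendsto_of_le_of_le
      (tendsto_const_nhds) ?_ (fun n => (hx0 n).le) (fun n => (hxub n).le)
    have : Tendsto (fun n : ℕ => π * (n + 1)) atTop atTop := by
      apply Tendsto.const_mul_atTop hπ
      exact tendsto_atTop_add_const_right _ _ tendsto_natCast_atTop_atTop
    have h2 := this.inv_tendsto_atTop
    simp only [Pi.inv_def] at h2
    simpa [one_div] using h2
  · have hanti : StrictAnti x := by
      apply strictAnti_nat_of_succ_lt
      intro n
      have h1 := hxub (n + 1)
      have h2 := hxlb n
      have : (1:ℝ) / (π * (↑(n + 1) + 1)) = 1 / (π * (n + 2)) := by push_cast; ring_nf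
      rw [this] at h1
      linarith
    exact hanti.injective
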